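/- Let A = ℂ² with basis e₁,e₂ and let a,b ∈ ℂ. Define a ℂ-bilinear operation ∘ on A by e₁∘e₁ = a e₁ + b e₂, e₁∘e₂ = (a+1) e₂, e₂∘e₁ = a e₂, e₂∘e₂ = 0. Then (A,∘) is a Novikov algebra, i.e. for all x,y,z ∈ A: (x∘y)∘z − (y∘x)∘z = x∘(y∘z) − y∘(x∘z) and (x∘y)∘z = (x∘z)∘y; moreover its commutator satisfies e₁∘e₂ − e₂∘e₁ = e₂. -/
import Mathlib


/-- For any a, b ∈ ℂ, the ℂ-bilinear operation on ℂ² defined on the basis by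
e₁∘e₁ = a e₁ + b e₂, e₁∘e₂ = (a+1) e₂, e₂∘e₁ = a e₂, e₂∘e₂ = 0 is a Novikov product, and
its commutator satisfies e₁∘e₂ − e₂∘e₁ = e₂. -/
theorem stmt_13 (a b : ℂ)
    (mul : (Fin 2 → ℂ) →ₗ[ℂ] (Fin 2 → ℂ) →ₗ[ℂ] (Fin 2 → ℂ))
    (e₁ e₂ : Fin 2 → ℂ) (he₁ : e₁ = ![1, 0]) (he₂ : e₂ = ![0, 1])
    (h11 : mul e₁ e₁ = a • e₁ + b • e₂)
    (h12 : mul e₁ e₂ = (a + 1) • e₂)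
    (h21 : mul e₂ e₁ = a • e₂)
    (h22 : mul e₂ e₂ = 0) :
    (∀ x y z : Fin 2 → ℂ,
        mul (mul x y) z - mul (mul y x) z = mul x (mul y z) - mul y (mul x z)) ∧
    (∀ x y z : Fin 2 → ℂ, mul (mul x y) z = mul (mul x z) y) ∧
    mul e₁ e₂ - mul e₂ e₁ = e₂ := by
  have hdec : ∀ x : Fin 2 → ℂ, x = x 0 • e₁ + x 1 • e₂ := by
    intro x
    funext i
    fin_cases i <;> simp [he₁, he₂]
  have key : ∀ x y : Fin 2 → ℂ, mul x y =
      (x 0 * y 0) • (a • e₁ + b • e₂) + (x 0 * y 1) • ((a + 1) • e₂)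
        + (x 1 * y 0) • (a • e₂) := by
    intro x y
    conv_lhs => rw [hdec x, hdec y]
    simp [h11, h12, h21, h22, smul_add, smul_smul, mul_comm]
    module
  refine ⟨?_, ?_, ?_⟩
  · intro x y z
    rw [key x y, key y x, key (_ + _ + _) z, key (_ + _ + _) z,
        key y z, key x z, key x (_ + _ + _), key y (_ + _ + _)]
    simp only [Pi.add_apply, Pi.smul_apply, smul_eq_mul, he₁, he₂,
      Matrix.cons_val_zero, Matrix.cons_val_one, Matrix.head_cons,
      mul_one, mul_zero, add_zero, zero_add]
    match_scalars <;> ring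
  · intro x y z
    rw [key x y, key x z, key (_ + _ + _) z, key (_ + _ + _) y]
    simp only [Pi.add_apply, Pi.smul_apply, smul_eq_mul, he₁, he₂,
      Matrix.cons_val_zero, Matrix.cons_val_one, Matrix.head_cons,
      mul_one, mul_zero, add_zero, zero_add]
    match_scalars <;> ring
  · rw [h12, h21]
    module
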